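/- arXiv:1612.06726 — 2 statements merged into one kernel-verified Lean document; each statement's English description precedes it below -/
import Mathlib

section
/- Let I ⊆ S = C[x_0,...,x_n] be a homogeneous ideal with Hilbert polynomial p_I. Define the defect δ_k(I) = p_I(k) − h_I(k), where h_I(k) = dim (S/I)_k. Then δ_k(I) = (−1)^n Σ_{j ≥ k+n+1} B_j · binom(j−k−1, n), where B_j are the alternating sums of graded Betti numbers of S/I. In particular, if δ_k(I) ≠ 0 then B_j ≠ 0 for some j ≥ k+n+1. -/
open MvPolynomial Module Finset DirectSum

/-- The polynomial ring `ℂ[x_0, …, x_n]`. -/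
abbrev S (n : ℕ) := MvPolynomial (Fin (n + 1)) ℂ

/-- The ideal `I` is homogeneous: it contains all homogeneous components of its elements. -/
def IsHomogeneousIdeal {n : ℕ} (I : Ideal (S n)) : Prop :=
  ∀ f ∈ I, ∀ k : ℕ, homogeneousComponent k f ∈ I

/-- The degree-`k` graded piece of `S/I`, realized as the image of the homogeneous
polynomials of degree `k` in the quotient ring. -/
noncomputable def quotPiece {n : ℕ} (I : Ideal (S n)) (k : ℕ) :
    Submodule ℂ (S n ⧸ I) :=
  (homogeneousSubmodule (Fin (n + 1)) ℂ k).map (Ideal.Quotient.mkₐ ℂ I).toLinearMap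

/-- The Hilbert function `h_{S/I}(k) = dim_ℂ (S/I)_k`. -/
noncomputable def hilb {n : ℕ} (I : Ideal (S n)) (k : ℕ) : ℕ :=
  finrank ℂ (quotPiece I k)

/-- The degree-`k` graded piece of the graded free module `F_i = ⊕_j S(-j)^{β_{i,j}}`,
namely `⊕_{j ≤ k} (S_{k-j})^{β_{i,j}}` (terms with `j > k` vanish). -/
noncomputable abbrev freePiece (n : ℕ) (β : ℕ → ℕ → ℕ) (i k : ℕ) :=
  DirectSum (Fin (k + 1)) fun j => (Fin (β i (j : ℕ)) → homogeneousSubmodule (Fin (n + 1)) ℂ (k - (j : ℕ)))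

/-- A degreewise incarnation of a graded free resolution
`0 → F_s → ⋯ → F_0 → S/I → 0` with `F_i = ⊕_j S(-j)^{β_{i,j}}` finitely generated:
for every degree `k` there are linear maps forming an exact sequence of the degree-`k`
pieces. (We take `β i j = 0` for `i > s`, so the chain is eventually zero.) -/
def IsDegreewiseFreeResolution (n s : ℕ) (β : ℕ → ℕ → ℕ) (I : Ideal (S n)) : Prop :=
  (∀ i j, s < i → β i j = 0) ∧
  ∀ k : ℕ, ∃ (d : ∀ i : ℕ, freePiece n β (i + 1) k →ₗ[ℂ] freePiece n β i k)
    (ε : freePiece n β 0 k →ₗ[ℂ] quotPiece I k),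
      Function.Surjective ε ∧ Function.Exact (d 0) ε ∧
      ∀ i : ℕ, Function.Exact (d (i + 1)) (d i)

/-! ### Auxiliary results -/

/-- Degree-`d` finsupps on `σ` correspond to the `d`-th symmetric power of `σ`. -/
noncomputable def degFinsuppEquivSym (σ : Type*) [DecidableEq σ] (d : ℕ) :
    {m : σ →₀ ℕ // Finsupp.degree m = d} ≃ Sym σ d :=
  (Equiv.subtypeEquiv (Equiv.refl _) fun m => by
    simp [Finsupp.degree, Finsupp.sum]; exact Iff.rfl).trans (Sym.equivNatSum σ d).symm

noncomputable instance fintypeDegSet (n d : ℕ) :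
    Fintype ↥{m : Fin (n+1) →₀ ℕ | Finsupp.degree m = d} :=
  Fintype.ofEquiv (Sym (Fin (n+1)) d)
    (show Sym (Fin (n+1)) d ≃ ↥{m : Fin (n+1) →₀ ℕ | Finsupp.degree m = d} from
      (degFinsuppEquivSym (Fin (n+1)) d).symm)

lemma card_degSet (n d : ℕ) :
    Fintype.card ↥{m : Fin (n+1) →₀ ℕ | Finsupp.degree m = d} = (d + n).choose n := by
  rw [Fintype.card_congr
    (show ↥{m : Fin (n+1) →₀ ℕ | Finsupp.degree m = d} ≃ Sym (Fin (n+1)) d from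
      degFinsuppEquivSym (Fin (n+1)) d), Sym.card_sym_eq_choose,
    Fintype.card_fin, show n + 1 + d - 1 = d + n by omega,
    ← Nat.choose_symm (Nat.le_add_left n d), Nat.add_sub_cancel]

lemma homog_eq_restrict (n d : ℕ) :
    homogeneousSubmodule (Fin (n+1)) ℂ d
      = restrictSupport ℂ {m : Fin (n+1) →₀ ℕ | Finsupp.degree m = d} := by
  ext φ
  rw [mem_homogeneousSubmodule, restrictSupport, AddMonoidAlgebra.mem_supported]
  constructor
  · intro h m hm
    have := h (MvPolynomial.mem_support_iff.mp hm)
    simpa [Finsupp.degree_eq_weight_one, Pi.one_def] using this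
  · intro h m hm
    have := h (MvPolynomial.mem_support_iff.mpr hm)
    simpa [Finsupp.degree_eq_weight_one, Pi.one_def] using this

lemma finrank_homog (n d : ℕ) :
    finrank ℂ (homogeneousSubmodule (Fin (n+1)) ℂ d) = (d + n).choose n := by
  rw [homog_eq_restrict, finrank_eq_card_basis (basisRestrictSupport ℂ _)]
  exact card_degSet n d

instance fdHomog (n d : ℕ) :
    FiniteDimensional ℂ (homogeneousSubmodule (Fin (n+1)) ℂ d) := by
  rw [homog_eq_restrict]
  exact Module.Finite.of_basis (basisRestrictSupport ℂ _)

/-- Euler characteristic of a finite exact sequence of finite-dimensional spaces. -/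
lemma euler_char {K : Type*} [Field K] (V : ℕ → Type*) [∀ i, AddCommGroup (V i)]
    [∀ i, Module K (V i)] [∀ i, FiniteDimensional K (V i)]
    {Q : Type*} [AddCommGroup Q] [Module K Q] [FiniteDimensional K Q]
    (s : ℕ) (hV : ∀ i, s < i → Subsingleton (V i))
    (d : ∀ i : ℕ, V (i+1) →ₗ[K] V i) (ε : V 0 →ₗ[K] Q)
    (hsurj : Function.Surjective ε) (h0 : Function.Exact (d 0) ε)
    (hd : ∀ i, Function.Exact (d (i+1)) (d i)) :
    (finrank K Q : ℤ) = ∑ i ∈ Finset.range (s+1), (-1:ℤ)^i * finrank K (V i) := by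
  set r : ℕ → ℤ := fun i => (finrank K (LinearMap.range (d i)) : ℤ) with hr
  have hker : ∀ i, LinearMap.ker (d i) = LinearMap.range (d (i+1)) := fun i =>
    LinearMap.exact_iff.mp (hd i)
  have hVi : ∀ i, (finrank K (V (i+1)) : ℤ) = r i + r (i+1) := by
    intro i
    have h := LinearMap.finrank_range_add_finrank_ker (d i)
    rw [hker i] at h
    rw [← h]
    push_cast
    ring
  have hV0 : (finrank K (V 0) : ℤ) = (finrank K Q : ℤ) + r 0 := by
    have h := LinearMap.finrank_range_add_finrank_ker ε
    rw [LinearMap.exact_iff.mp h0, LinearMap.range_eq_top.mpr hsurj, finrank_top] at h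
    rw [← h]; push_cast; ring
  have hrs : r s = 0 := by
    haveI := hV (s+1) (lt_add_one s)
    have h := LinearMap.finrank_range_le (d s)
    have h2 : finrank K (V (s+1)) = 0 := finrank_zero_of_subsingleton
    rw [h2, Nat.le_zero] at h
    simp [hr, h]
  set g : ℕ → ℤ := fun i => (-1:ℤ)^i * r i with hg
  symm
  calc ∑ i ∈ Finset.range (s+1), (-1:ℤ)^i * finrank K (V i)
      = ∑ i ∈ Finset.range s, (-1:ℤ)^(i+1) * (finrank K (V (i+1)) : ℤ)
        + (-1:ℤ)^0 * finrank K (V 0) := Finset.sum_range_succ' _ s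
    _ = ∑ i ∈ Finset.range s, (g (i+1) - g i) + ((finrank K Q : ℤ) + r 0) := by
        rw [hV0]
        congr 1
        · exact Finset.sum_congr rfl fun i _ => by rw [hVi i]; simp [hg]; ring
        · simp
    _ = (g s - g 0) + ((finrank K Q : ℤ) + r 0) := by rw [Finset.sum_range_sub g s]
    _ = (finrank K Q : ℤ) := by simp [hg, hrs]

instance fdFreePiece (n : ℕ) (β : ℕ → ℕ → ℕ) (i k : ℕ) :
    FiniteDimensional ℂ (freePiece n β i k) :=
  Module.Finite.equiv (DirectSum.linearEquivFunOnFintype ℂ _ _).symm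

instance fdQuotPiece {n : ℕ} (I : Ideal (S n)) (k : ℕ) :
    FiniteDimensional ℂ (quotPiece I k) :=
  Module.Finite.map _ _

lemma finrank_freePiece (n : ℕ) (β : ℕ → ℕ → ℕ) (i k : ℕ) :
    finrank ℂ (freePiece n β i k)
      = ∑ j ∈ range (k+1), β i j * (k - j + n).choose n := by
  rw [(DirectSum.linearEquivFunOnFintype ℂ _ _).finrank_eq, Module.finrank_pi_fintype]
  rw [← Fin.sum_univ_eq_sum_range (fun j => β i j * (k - j + n).choose n) (k+1)]
  refine Finset.sum_congr rfl fun j _ => ?_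
  rw [Module.finrank_pi_fintype, finrank_homog]
  simp [Finset.sum_const, mul_comm]

lemma subsingleton_freePiece (n : ℕ) (β : ℕ → ℕ → ℕ) (i k : ℕ) (h : ∀ j, β i j = 0) :
    Subsingleton (freePiece n β i k) := by
  haveI : ∀ j : Fin (k+1), Subsingleton
      (Fin (β i (j : ℕ)) → homogeneousSubmodule (Fin (n + 1)) ℂ (k - (j : ℕ))) := by
    intro j
    haveI : IsEmpty (Fin (β i (j : ℕ))) := by rw [h (j : ℕ)]; infer_instance
    infer_instance
  infer_instance

lemma hilb_eq_sum (n s : ℕ) (I : Ideal (S n)) (β : ℕ → ℕ → ℕ)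
    (hres : IsDegreewiseFreeResolution n s β I) (k : ℕ) :
    (hilb I k : ℤ)
      = ∑ i ∈ range (s+1), (-1:ℤ)^i * finrank ℂ (freePiece n β i k) := by
  obtain ⟨hβ, hex⟩ := hres
  obtain ⟨d, ε, hsurj, h0, hd⟩ := hex k
  exact euler_char (fun i => freePiece n β i k) s
    (fun i hi => subsingleton_freePiece n β i k (fun j => hβ i j hi)) d ε hsurj h0 hd

lemma desc_eval_le (n k j : ℕ) (h : j ≤ k) :
    (descPochhammer ℚ n).eval ((k:ℚ) + ((n:ℚ) - (j:ℚ)))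
      = (n.factorial : ℚ) * ((k - j + n).choose n : ℚ) := by
  have hx : (k:ℚ) + ((n:ℚ) - (j:ℚ)) = ((k - j + n : ℕ) : ℚ) := by
    rw [Nat.cast_add, Nat.cast_sub h]; ring
  rw [hx, descPochhammer_eval_eq_descFactorial, Nat.descFactorial_eq_factorial_mul_choose]
  push_cast; ring

lemma desc_eval_gt (n k j : ℕ) (h : k < j) :
    (descPochhammer ℚ n).eval ((k:ℚ) + ((n:ℚ) - (j:ℚ)))
      = (-1:ℚ)^n * ((n.factorial : ℚ) * ((j - k - 1).choose n : ℚ)) := by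
  set x : ℚ := (k:ℚ) + ((n:ℚ) - (j:ℚ)) with hxdef
  have key : (ascPochhammer ℚ n).eval (-x) = (-1:ℚ)^n * (descPochhammer ℚ n).eval x :=
    ascPochhammer_eval_neg_eq_descPochhammer ℚ x n
  have hdesc : (descPochhammer ℚ n).eval x = (-1:ℚ)^n * (ascPochhammer ℚ n).eval (-x) := by
    rw [key, ← mul_assoc, ← mul_pow]
    simp
  rcases le_or_gt j (k + n) with hle | hgt
  · have hm : k + n - j < n := by omega
    have hxm : -x = -((k + n - j : ℕ) : ℚ) := by
      rw [Nat.cast_sub (by omega)]; push_cast; ring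
    rw [hdesc, hxm, ascPochhammer_eval_neg_coe_nat_of_lt hm,
      Nat.choose_eq_zero_of_lt (by omega : j - k - 1 < n)]
    simp
  · have hxm : -x = ((j - k - n : ℕ) : ℚ) := by
      rw [Nat.cast_sub (by omega), Nat.cast_sub (by omega)]; push_cast; ring
    have hasc : (ascPochhammer ℚ n).eval (((j - k - n : ℕ) : ℚ))
        = ((j - k - 1).descFactorial n : ℚ) := by
      rw [← ascPochhammer_eval_cast, ascPochhammer_nat_eq_descFactorial,
        show j - k - n + n - 1 = j - k - 1 by omega]
    rw [hdesc, hxm, hasc, Nat.descFactorial_eq_factorial_mul_choose]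
    push_cast; ring

/-! ### Main theorem -/

/-- If `p_I` is the Hilbert polynomial of `S/I` and
`δ_k(I) = p_I(k) − h_I(k)` is the defect, then
`δ_k(I) = (−1)^n Σ_{j ≥ k+n+1} B_j ⬝ binom(j−k−1, n)`; in particular, if `δ_k(I) ≠ 0`
then `B_j ≠ 0` for some `j ≥ k+n+1`.  (Here `N` is a common bound beyond which all the
graded Betti numbers `β_{i,j}` vanish, so the sum `Σ_{j ≥ k+n+1}` is the finite sum
`Σ_{j=k+n+1}^{N-1}`.) -/
theorem defect_from_betti_numbers
    (n s : ℕ) (I : Ideal (S n)) (hI : IsHomogeneousIdeal I)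
    (β : ℕ → ℕ → ℕ) (hres : IsDegreewiseFreeResolution n s β I)
    (N : ℕ) (hN : ∀ i j, N ≤ j → β i j = 0)
    (B : ℕ → ℤ) (hB : ∀ j, B j = ∑ i ∈ range (s + 1), (-1 : ℤ) ^ i * β i j)
    (p : Polynomial ℚ)
    (hp : ∃ k₀ : ℕ, ∀ k : ℕ, k₀ ≤ k → p.eval (k : ℚ) = (hilb I k : ℚ))
    (δ : ℕ → ℚ) (hδ : ∀ k : ℕ, δ k = p.eval (k : ℚ) - (hilb I k : ℚ)) :
    ∀ k : ℕ,
      δ k = (-1 : ℚ) ^ n *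
          ∑ j ∈ Finset.Ico (k + n + 1) N, (B j : ℚ) * (Nat.choose (j - k - 1) n : ℚ) ∧
      (δ k ≠ 0 → ∃ j : ℕ, k + n + 1 ≤ j ∧ B j ≠ 0) := by
  have hBzero : ∀ j, N ≤ j → B j = 0 := by
    intro j hj
    rw [hB j]
    refine Finset.sum_eq_zero fun i _ => by rw [hN i j hj]; simp
  -- the Hilbert function formula
  have hhilbQ : ∀ m : ℕ, (hilb I m : ℚ)
      = ∑ j ∈ range (m+1), (B j : ℚ) * ((m - j + n).choose n : ℚ) := by
    intro m
    have h1 := hilb_eq_sum n s I β hres m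
    have h2 : ((hilb I m : ℤ) : ℚ)
        = ((∑ i ∈ range (s+1), (-1:ℤ)^i * finrank ℂ (freePiece n β i m) : ℤ) : ℚ) :=
      congrArg _ h1
    push_cast [finrank_freePiece] at h2
    rw [show ((hilb I m : ℕ) : ℚ) = ((hilb I m : ℤ) : ℚ) by push_cast; rfl] at h2 ⊢
    rw [h2]
    simp_rw [Finset.mul_sum]
    rw [Finset.sum_comm]
    refine Finset.sum_congr rfl fun j _ => ?_
    rw [hB j]
    push_cast
    rw [Finset.sum_mul]
    exact Finset.sum_congr rfl fun i _ => by ring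
  set nf : ℚ := (n.factorial : ℚ) with hnf
  have hnf0 : nf ≠ 0 := Nat.cast_ne_zero.mpr (Nat.factorial_ne_zero n)
  set q : Polynomial ℚ := ∑ j ∈ range N, Polynomial.C ((B j : ℚ) / nf) *
      ((descPochhammer ℚ n).comp (Polynomial.X + Polynomial.C ((n:ℚ) - (j:ℚ)))) with hq
  have hqeval : ∀ x : ℚ, q.eval x
      = ∑ j ∈ range N, (B j : ℚ)/nf * (descPochhammer ℚ n).eval (x + ((n:ℚ) - (j:ℚ))) := by
    intro x
    rw [hq, Polynomial.eval_finset_sum]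
    exact Finset.sum_congr rfl fun j _ => by
      simp [Polynomial.eval_comp]
  -- q agrees with hilb for large inputs
  have hagree : ∀ m : ℕ, N ≤ m → q.eval (m:ℚ) = (hilb I m : ℚ) := by
    intro m hm
    rw [hqeval, hhilbQ m]
    have hcongr : ∀ j ∈ range N,
        (B j : ℚ)/nf * (descPochhammer ℚ n).eval ((m:ℚ) + ((n:ℚ) - (j:ℚ)))
          = (B j : ℚ) * ((m - j + n).choose n : ℚ) := by
      intro j hj
      rw [desc_eval_le n m j (by have := mem_range.mp hj; omega), ← hnf]
      field_simp
    rw [Finset.sum_congr rfl hcongr]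
    refine Finset.sum_subset (Finset.range_subset_range.mpr (by omega)) fun j hj hj' => ?_
    rw [hBzero j (by simp only [mem_range, not_lt] at hj'; exact hj')]
    simp
  -- p = q
  have hpq : p = q := by
    obtain ⟨k₀, hk₀⟩ := hp
    have hroots : {x : ℚ | (p - q).IsRoot x}.Infinite := by
      refine Set.infinite_of_injective_forall_mem
        (f := fun m : ℕ => ((max k₀ N + m : ℕ) : ℚ)) ?_ ?_
      · intro a b hab
        simp only [Nat.cast_inj] at hab
        omega
      · intro m
        simp only [Set.mem_setOf_eq, Polynomial.IsRoot, Polynomial.eval_sub, sub_eq_zero]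
        rw [hk₀ _ (by omega), hagree _ (by omega)]
    have := Polynomial.eq_zero_of_infinite_isRoot _ hroots
    exact sub_eq_zero.mp this
  intro k
  set M := max N (k+1) with hM
  -- q evaluated at k, over range M
  have hqk : q.eval (k:ℚ)
      = ∑ j ∈ range M, (B j : ℚ)/nf * (descPochhammer ℚ n).eval ((k:ℚ) + ((n:ℚ) - (j:ℚ))) := by
    rw [hqeval]
    refine Finset.sum_subset (Finset.range_subset_range.mpr (le_max_left _ _)) fun j hj hj' => ?_
    rw [hBzero j (by simp only [mem_range, not_lt] at hj'; exact hj')]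
    simp
  -- hilb at k, over range M
  have hhk : (hilb I k : ℚ)
      = ∑ j ∈ range M, (if j ≤ k then (B j : ℚ) * ((k - j + n).choose n : ℚ) else 0) := by
    rw [hhilbQ k]
    rw [show (∑ j ∈ range (k+1), (B j : ℚ) * ((k - j + n).choose n : ℚ))
        = ∑ j ∈ range (k+1), (if j ≤ k then (B j : ℚ) * ((k - j + n).choose n : ℚ) else 0) from
      Finset.sum_congr rfl fun j hj => (if_pos (Nat.lt_succ_iff.mp (mem_range.mp hj))).symm]
    exact Finset.sum_subset (Finset.range_subset_range.mpr (le_max_right _ _)) fun j hj hj' =>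
      if_neg (by simp only [mem_range, not_lt] at hj'; omega)
  have hδk : δ k = ∑ j ∈ range M,
      (if j ≤ k then (0:ℚ) else (B j : ℚ) * ((-1:ℚ)^n * ((j - k - 1).choose n : ℚ))) := by
    rw [hδ k, hpq, hqk, hhk, ← Finset.sum_sub_distrib]
    refine Finset.sum_congr rfl fun j hj => ?_
    by_cases hjk : j ≤ k
    · rw [if_pos hjk, if_pos hjk, desc_eval_le n k j hjk, ← hnf]
      field_simp
      ring
    · rw [if_neg hjk, if_neg hjk, desc_eval_gt n k j (not_le.mp hjk), ← hnf]
      field_simp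
      ring
  have hformula : δ k = (-1:ℚ)^n *
      ∑ j ∈ Finset.Ico (k + n + 1) N, (B j : ℚ) * ((j - k - 1).choose n : ℚ) := by
    rw [hδk]
    rw [show (∑ j ∈ range M,
        (if j ≤ k then (0:ℚ) else (B j : ℚ) * ((-1:ℚ)^n * ((j - k - 1).choose n : ℚ))))
        = ∑ j ∈ Finset.Ico (k + n + 1) N,
        (if j ≤ k then (0:ℚ) else (B j : ℚ) * ((-1:ℚ)^n * ((j - k - 1).choose n : ℚ))) from
      (Finset.sum_subset (fun j hj => mem_range.mpr (by
          have := Finset.mem_Ico.mp hj; omega)) fun j hj hj' => ?_).symm]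
    · rw [Finset.mul_sum]
      refine Finset.sum_congr rfl fun j hj => ?_
      rw [if_neg (by have := Finset.mem_Ico.mp hj; omega)]
      ring
    · by_cases hjk : j ≤ k
      · rw [if_pos hjk]
      · rw [if_neg hjk]
        rw [Finset.mem_Ico, not_and_or] at hj'
        rcases hj' with h1 | h2
        · rw [Nat.choose_eq_zero_of_lt (by omega : j - k - 1 < n)]
          simp
        · rw [hBzero j (by omega)]
          simp
  refine ⟨hformula, fun hne => ?_⟩
  rw [hformula] at hne
  have hsum : (∑ j ∈ Finset.Ico (k + n + 1) N, (B j : ℚ) * ((j - k - 1).choose n : ℚ)) ≠ 0 := by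
    intro h0
    rw [h0, mul_zero] at hne
    exact hne rfl
  obtain ⟨j, hjmem, hjne⟩ := Finset.exists_ne_zero_of_sum_ne_zero hsum
  refine ⟨j, (Finset.mem_Ico.mp hjmem).1, fun hBj => ?_⟩
  rw [hBj] at hjne
  simp at hjne
end

section
/- Let d ≥ 8 and 4 ≤ a ≤ d/2. Let (x_0, f_2, g) be a complete intersection ideal in C[x_0,...,x_3] with f_2 ∈ C[x_1,x_2,x_3]_a and g ∈ C[x_1,x_2,x_3]_{d−1}. Then any homogeneous f of degree d lying in (x_0, f_2, g)^2 can be written as f = x_0 f_1 + f_2^2 f_3 with f_1 ∈ C[x_0,...,x_3]_{d−1} and f_3 ∈ C[x_1,x_2,x_3]_{d−2a}; moreover this decomposition is unique up to rescaling f_3 by a nonzero constant c and f_2 by c^{-1/2}-type compensation (i.e., replacing (f_2^2, f_3) by (c^{-1} f_2^2, c f_3)). -/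
open MvPolynomial Module Finset

/-- A polynomial not involving the variable `x₀` (i.e. lying in `ℂ[x₁,…,x₃]`). -/
def NoX0 (f : S 3) : Prop := ∀ m ∈ f.support, m 0 = 0

/-! ### Auxiliary material: the "set `x₀ := 0`" algebra map -/

/-- The algebra endomorphism of `ℂ[x₀,…,x₃]` killing `x₀`. -/
noncomputable def killX0 : S 3 →ₐ[ℂ] S 3 :=
  aeval (fun i => if i = 0 then 0 else X i)

lemma killX0_monomial (u : Fin 4 →₀ ℕ) (c : ℂ) :
    killX0 (monomial u c) = if u 0 = 0 then monomial u c else 0 := by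
  rw [killX0, aeval_monomial]
  by_cases h : u 0 = 0
  · rw [if_pos h, monomial_eq]
    congr 1
    apply Finsupp.prod_congr
    intro i hi
    have hi0 : i ≠ 0 := by
      rintro rfl
      exact (Finsupp.mem_support_iff.mp hi) h
    rw [if_neg hi0]
  · rw [if_neg h]
    have : (u.prod fun i k => (if i = 0 then 0 else X i : S 3) ^ k) = 0 := by
      apply Finset.prod_eq_zero (Finsupp.mem_support_iff.mpr h)
      simp [zero_pow h]
    rw [this, mul_zero]

lemma coeff_killX0 (p : S 3) (m : Fin 4 →₀ ℕ) :
    coeff m (killX0 p) = if m 0 = 0 then coeff m p else 0 := by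
  induction p using MvPolynomial.induction_on' with
  | monomial u c =>
    rw [killX0_monomial]
    by_cases hu : u 0 = 0
    · rw [if_pos hu]
      by_cases hm : m 0 = 0
      · rw [if_pos hm]
      · rw [if_neg hm, coeff_monomial, if_neg ?_]
        intro e; exact hm (by rw [← e]; exact hu)
    · rw [if_neg hu, coeff_zero]
      by_cases hm : m 0 = 0
      · rw [if_pos hm, coeff_monomial, if_neg (fun e => hu (by rw [e]; exact hm))]
      · rw [if_neg hm]
  | add p q hp hq =>
    rw [map_add, coeff_add, coeff_add, hp, hq]
    split_ifs <;> simp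

lemma killX0_eq_self {p : S 3} (h : NoX0 p) : killX0 p = p := by
  ext m
  rw [coeff_killX0]
  by_cases hm : m 0 = 0
  · rw [if_pos hm]
  · rw [if_neg hm]
    by_contra hc
    exact hm (h m (MvPolynomial.mem_support_iff.mpr fun e => hc e.symm))

lemma noX0_killX0 (p : S 3) : NoX0 (killX0 p) := by
  intro m hm
  rw [MvPolynomial.mem_support_iff, coeff_killX0] at hm
  by_contra hm0
  rw [if_neg hm0] at hm
  exact hm rfl

lemma killX0_X0 : killX0 (X 0) = 0 := by simp [killX0]

lemma NoX0.mul {p q : S 3} (hp : NoX0 p) (hq : NoX0 q) : NoX0 (p * q) := by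
  have : p * q = killX0 (p * q) := by rw [map_mul, killX0_eq_self hp, killX0_eq_self hq]
  rw [this]; exact noX0_killX0 _

lemma NoX0.sub {p q : S 3} (hp : NoX0 p) (hq : NoX0 q) : NoX0 (p - q) := by
  have : p - q = killX0 (p - q) := by rw [map_sub, killX0_eq_self hp, killX0_eq_self hq]
  rw [this]; exact noX0_killX0 _

lemma killX0_isHomogeneous {p : S 3} {n : ℕ} (hp : p.IsHomogeneous n) :
    (killX0 p).IsHomogeneous n := by
  intro d hd
  rw [coeff_killX0] at hd
  by_cases hm : d 0 = 0
  · rw [if_pos hm] at hd; exact hp hd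
  · rw [if_neg hm] at hd; exact absurd rfl hd

lemma X0_dvd_sub_killX0 (p : S 3) : (X 0 : S 3) ∣ p - killX0 p := by
  induction p using MvPolynomial.induction_on with
  | C c => simp [killX0]
  | add p q hp hq =>
    have := dvd_add hp hq
    rw [map_add]
    convert this using 1
    ring
  | mul_X p i hp =>
    rw [map_mul]
    by_cases hi : i = 0
    · subst hi
      rw [killX0, aeval_X, if_pos rfl, mul_zero, sub_zero]
      exact Dvd.intro p (mul_comm _ _)
    · rw [show killX0 (X i) = X i by simp [killX0, hi]]
      have : p * X i - killX0 p * X i = (p - killX0 p) * X i := by ring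
      rw [this]
      exact hp.mul_right _

/-! ### Auxiliary material: homogeneous components -/

lemma comp_of_homog {p : S 3} {n k : ℕ} (hp : p.IsHomogeneous n) :
    homogeneousComponent k p = if k = n then p else 0 :=
  homogeneousComponent_of_mem ((mem_homogeneousSubmodule _ _).mpr hp)

lemma comp_mul {p : S 3} {m : ℕ} (hp : p.IsHomogeneous m) (q : S 3) (k : ℕ) :
    homogeneousComponent k (q * p) =
      if m ≤ k then homogeneousComponent (k - m) q * p else 0 := by
  induction q using MvPolynomial.induction_on' with
  | monomial u c =>
    have h1 : ((monomial u c : S 3) * p).IsHomogeneous (u.degree + m) :=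
      (isHomogeneous_monomial c rfl).mul hp
    have h2 : (monomial u c : S 3).IsHomogeneous u.degree := isHomogeneous_monomial c rfl
    rw [comp_of_homog h1, comp_of_homog h2]
    by_cases hmk : m ≤ k
    · rw [if_pos hmk]
      by_cases he : k = u.degree + m
      · rw [if_pos he, if_pos (by omega)]
      · rw [if_neg he, if_neg (by omega), zero_mul]
    · rw [if_neg hmk, if_neg (by omega)]
  | add q r hq hr =>
    rw [add_mul, map_add, hq, hr, map_add]
    split_ifs <;> simp [add_mul]

/-! ### Auxiliary material: nonvanishing of `f₂` from regularity -/

set_option maxHeartbeats 2000000 in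
lemma f2_ne_zero {f₂ g : S 3}
    (hreg : RingTheory.Sequence.IsRegular (S 3) [X 0, f₂, g]) : f₂ ≠ 0 := by
  have h := hreg.toIsWeaklyRegular
  rw [RingTheory.Sequence.isWeaklyRegular_cons_iff] at h
  obtain ⟨-, h⟩ := h
  rw [RingTheory.Sequence.isWeaklyRegular_cons_iff] at h
  obtain ⟨h, -⟩ := h
  rintro rfl
  have h10 : (Submodule.Quotient.mk 1 : QuotSMulTop (X 0 : S 3) (S 3)) =
      Submodule.Quotient.mk 0 := by
    have := h (a₁ := Submodule.Quotient.mk 1) (a₂ := Submodule.Quotient.mk 0) (by simp)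
    exact this
  rw [Submodule.Quotient.eq] at h10
  simp only [sub_zero] at h10
  rw [← SetLike.mem_coe, Submodule.coe_pointwise_smul, Set.mem_smul_set] at h10
  obtain ⟨w, -, hw⟩ := h10
  rw [smul_eq_mul] at hw
  have := congrArg (eval (fun _ => (0 : ℂ))) hw
  simp at this

set_option maxHeartbeats 2000000 in
/-- Let `d ≥ 8` and `4 ≤ a ≤ d/2`, and let `(x₀, f₂, g)` be a complete
intersection ideal with `f₂ ∈ ℂ[x₁,x₂,x₃]_a` and `g ∈ ℂ[x₁,x₂,x₃]_{d−1}`.  Then any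
homogeneous `f` of degree `d` in `(x₀, f₂, g)²` can be written as `f = x₀f₁ + f₂²f₃`
with `f₁ ∈ ℂ[x₀,…,x₃]_{d−1}` and `f₃ ∈ ℂ[x₁,x₂,x₃]_{d−2a}`; moreover the decomposition
is unique up to replacing `(f₂², f₃)` by `(c⁻¹f₂², cf₃)` for a nonzero constant `c`. -/
theorem decomposition_x0f1_plus_f2sq_f3
    (d a : ℕ) (hd : 8 ≤ d) (ha : 4 ≤ a) (ha' : 2 * a ≤ d)
    (f₂ g : S 3) (hf₂ : f₂.IsHomogeneous a) (hf₂' : NoX0 f₂)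
    (hg : g.IsHomogeneous (d - 1)) (hg' : NoX0 g)
    (hreg : RingTheory.Sequence.IsRegular (S 3) [X 0, f₂, g])
    (f : S 3) (hf : f.IsHomogeneous d)
    (hfI : f ∈ (Ideal.span {X (0 : Fin 4), f₂, g}) ^ 2) :
    ∃ f₁ f₃ : S 3, f₁.IsHomogeneous (d - 1) ∧
      f₃.IsHomogeneous (d - 2 * a) ∧ NoX0 f₃ ∧
      f = X 0 * f₁ + f₂ ^ 2 * f₃ ∧
      -- uniqueness, up to the rescaling `(f₂'², f₃') = (c⁻¹ f₂², c f₃)`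
      (∀ f₂' f₁' f₃' : S 3,
        f₂'.IsHomogeneous a → NoX0 f₂' →
        Ideal.span {X (0 : Fin 4), f₂'} = Ideal.span {X (0 : Fin 4), f₂} →
        f₁'.IsHomogeneous (d - 1) →
        f₃'.IsHomogeneous (d - 2 * a) → NoX0 f₃' →
        f = X 0 * f₁' + f₂' ^ 2 * f₃' →
          ∃ c : ℂ, c ≠ 0 ∧ f₃' = c • f₃ ∧ f₂' ^ 2 = c⁻¹ • f₂ ^ 2) := by
  classical
  have hf₂0 : f₂ ≠ 0 := f2_ne_zero hreg
  have hf₂sq : (f₂ ^ 2).IsHomogeneous (2 * a) := by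
    have := hf₂.pow 2; rwa [Nat.mul_comm] at this
  -- Step 1: `f` lies in the ideal generated by the pairwise products
  set J := Ideal.span {X (0 : Fin 4), f₂, g} with hJdef
  set K := Ideal.span {X (0 : Fin 4), f₂ ^ 2, f₂ * g, g ^ 2} with hKdef
  have hX0K : (X 0 : S 3) ∈ K := Ideal.subset_span (by simp)
  have hf22K : f₂ ^ 2 ∈ K := Ideal.subset_span (by simp)
  have hfgK : f₂ * g ∈ K := Ideal.subset_span (by simp)
  have hg2K : g ^ 2 ∈ K := Ideal.subset_span (by simp)
  have key : ∀ t ∈ ({X (0 : Fin 4), f₂, g} : Set (S 3)), ∀ s ∈ J, t * s ∈ K := by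
    intro t ht s hs
    induction hs using Submodule.span_induction with
    | mem x hx =>
      simp only [Set.mem_insert_iff, Set.mem_singleton_iff] at ht hx
      rcases ht with rfl | rfl | rfl <;> rcases hx with rfl | rfl | rfl
      · exact Ideal.mul_mem_right _ _ hX0K
      · exact Ideal.mul_mem_right _ _ hX0K
      · exact Ideal.mul_mem_right _ _ hX0K
      · exact Ideal.mul_mem_left _ _ hX0K
      · rw [← pow_two]; exact hf22K
      · exact hfgK
      · exact Ideal.mul_mem_left _ _ hX0K
      · rw [mul_comm]; exact hfgK
      · rw [← pow_two]; exact hg2K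
    | zero => rw [mul_zero]; exact zero_mem K
    | add x y hx hy ihx ihy => rw [mul_add]; exact add_mem ihx ihy
    | smul r x hx ih => rw [smul_eq_mul, mul_left_comm]; exact Ideal.mul_mem_left _ _ ih
  have hle : J ^ 2 ≤ K := by
    rw [pow_two, Ideal.mul_le]
    intro r hr s hs
    induction hr using Submodule.span_induction with
    | mem x hx => exact key x hx s hs
    | zero => rw [zero_mul]; exact zero_mem K
    | add x y hx hy ihx ihy => rw [add_mul]; exact add_mem ihx ihy
    | smul r' x hx ih => rw [smul_eq_mul, mul_assoc]; exact Ideal.mul_mem_left _ _ ih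
  have hfK : f ∈ K := hle hfI
  -- Step 2: extract explicit coefficients
  rw [hKdef, Ideal.mem_span_insert] at hfK
  obtain ⟨r₁, z₁, hz₁, hfe⟩ := hfK
  rw [Ideal.mem_span_insert] at hz₁
  obtain ⟨r₂, z₂, hz₂, rfl⟩ := hz₁
  rw [Ideal.mem_span_insert] at hz₂
  obtain ⟨r₃, z₃, hz₃, rfl⟩ := hz₂
  rw [Ideal.mem_span_singleton'] at hz₃
  obtain ⟨r₄, rfl⟩ := hz₃
  -- Step 3: take degree-`d` homogeneous components
  have e := congrArg (homogeneousComponent d) hfe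
  rw [comp_of_homog hf, if_pos rfl, map_add, map_add, map_add,
      comp_mul (isHomogeneous_X ℂ 0) r₁ d, if_pos (by omega : 1 ≤ d),
      comp_mul hf₂sq r₂ d, if_pos (by omega : 2 * a ≤ d),
      comp_mul (hf₂.mul hg) r₃ d, if_neg (by omega : ¬ a + (d - 1) ≤ d),
      comp_mul (hg.pow 2) r₄ d, if_neg (by omega : ¬ (d - 1) * 2 ≤ d)] at e
  set B := homogeneousComponent (d - 2 * a) r₂ with hBdef
  have hB : B.IsHomogeneous (d - 2 * a) := homogeneousComponent_isHomogeneous _ _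
  obtain ⟨B', hB'⟩ := X0_dvd_sub_killX0 B
  have hBsplit : B = X 0 * B' + killX0 B := by rw [← hB']; ring
  set f₃ := killX0 B with hf₃def
  have hf₃ : f₃.IsHomogeneous (d - 2 * a) := killX0_isHomogeneous hB
  have hf₃x0 : NoX0 f₃ := noX0_killX0 B
  have hprod : (f₂ ^ 2 * f₃).IsHomogeneous d := by
    have := hf₂sq.mul hf₃
    rwa [show 2 * a + (d - 2 * a) = d by omega] at this
  have e2 : f = X 0 * (homogeneousComponent (d - 1) r₁ + B' * f₂ ^ 2) + f₂ ^ 2 * f₃ := by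
    rw [e, hBsplit]; ring
  set Q := homogeneousComponent (d - 1) r₁ + B' * f₂ ^ 2 with hQdef
  set f₁ := homogeneousComponent (d - 1) Q with hf₁def
  have hf₁ : f₁.IsHomogeneous (d - 1) := homogeneousComponent_isHomogeneous _ _
  have e3 : f = X 0 * f₁ + f₂ ^ 2 * f₃ := by
    have e' := congrArg (homogeneousComponent d) e2
    rw [comp_of_homog hf, if_pos rfl, map_add,
        show (X 0 : S 3) * Q = Q * X 0 from mul_comm _ _,
        comp_mul (isHomogeneous_X ℂ 0) Q d, if_pos (by omega : 1 ≤ d),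
        comp_of_homog hprod, if_pos rfl] at e'
    rw [e']; ring
  refine ⟨f₁, f₃, hf₁, hf₃, hf₃x0, e3, ?_⟩
  -- Uniqueness
  intro f₂' f₁' f₃' hh₂ hh₂x0 hsp hh₁ hh₃ hh₃x0 heq'
  have getconst : ∀ p q : S 3, p.IsHomogeneous a → NoX0 p → q.IsHomogeneous a → NoX0 q →
      p ∈ Ideal.span {X (0 : Fin 4), q} → ∃ u : ℂ, p = C u * q := by
    intro p q hph hpx hqh hqx hmem
    rw [Ideal.mem_span_insert] at hmem
    obtain ⟨r, z, hz, hpe⟩ := hmem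
    rw [Ideal.mem_span_singleton'] at hz
    obtain ⟨w, rfl⟩ := hz
    have hk : p = killX0 w * q := by
      have := congrArg killX0 hpe
      rwa [killX0_eq_self hpx, map_add, map_mul, map_mul, killX0_X0, mul_zero,
        zero_add, killX0_eq_self hqx] at this
    refine ⟨coeff 0 (killX0 w), ?_⟩
    have := congrArg (homogeneousComponent a) hk
    rwa [comp_of_homog hph, if_pos rfl, comp_mul hqh (killX0 w) a, if_pos le_rfl,
      Nat.sub_self, homogeneousComponent_zero] at this
  obtain ⟨u, hu⟩ := getconst f₂' f₂ hh₂ hh₂x0 hf₂ hf₂' (hsp ▸ Ideal.subset_span (by simp))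
  obtain ⟨v, hv⟩ := getconst f₂ f₂' hf₂ hf₂' hh₂ hh₂x0 (hsp ▸ Ideal.subset_span (by simp))
  have huv : v * u = 1 := by
    have hC : (C v * C u - 1) * f₂ = 0 := by
      rw [hu] at hv
      linear_combination -hv
    rcases mul_eq_zero.mp hC with h | h
    · have : (C (v * u) : S 3) = C 1 := by rw [map_mul, map_one, ← sub_eq_zero]; exact h
      exact (C_inj ℂ _ _).mp this
    · exact absurd h hf₂0
  have hu0 : u ≠ 0 := by
    intro h
    rw [h, mul_zero] at huv
    exact zero_ne_one huv
  have hdiff : f₂ ^ 2 * f₃ - f₂' ^ 2 * f₃' = X 0 * (f₁' - f₁) := by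
    linear_combination heq' - e3
  have hno : NoX0 (f₂ ^ 2 * f₃ - f₂' ^ 2 * f₃') := by
    have n1 : NoX0 (f₂ ^ 2) := by rw [pow_two]; exact hf₂'.mul hf₂'
    have n2 : NoX0 (f₂' ^ 2) := by rw [pow_two]; exact hh₂x0.mul hh₂x0
    exact (n1.mul hf₃x0).sub (n2.mul hh₃x0)
  have hzero : f₂ ^ 2 * f₃ - f₂' ^ 2 * f₃' = 0 := by
    have h1 := killX0_eq_self hno
    rw [hdiff, map_mul, killX0_X0, zero_mul] at h1
    rw [hdiff, ← h1]
  have heqprod : f₂ ^ 2 * f₃ = f₂' ^ 2 * f₃' := sub_eq_zero.mp hzero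
  have hcancel : f₂ ^ 2 * (f₃ - C u ^ 2 * f₃') = 0 := by
    rw [hu] at heqprod
    linear_combination heqprod
  have hft : f₃ = C u ^ 2 * f₃' := by
    rcases mul_eq_zero.mp hcancel with h | h
    · exact absurd h (pow_ne_zero 2 hf₂0)
    · exact sub_eq_zero.mp h
  refine ⟨(u ^ 2)⁻¹, inv_ne_zero (pow_ne_zero 2 hu0), ?_, ?_⟩
  · rw [smul_eq_C_mul, hft, ← mul_assoc, ← map_pow, ← map_mul,
      inv_mul_cancel₀ (pow_ne_zero 2 hu0), map_one, one_mul]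
  · rw [inv_inv, smul_eq_C_mul, hu, mul_pow, map_pow]
end
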